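/- Let Q = {1,…,n} with n ≥ 3 and let L be a regular language whose minimal DFA has state set Q, a unique accepting state n−1 with quotient {ε}, and empty state n. If every transformation t in the transition semigroup satisfies: 1 ∉ rng(t), (n−1)t = nt = n, and for all j ≥ 1, 1t^j = n−1 implies it^j = n for all 1 < i < n−1, then L is factor-free. -/

import Mathlib

/-- No word of `L` is a proper factor (contiguous subword) of another word of `L`. -/
def FactorFree {α : Type} (L : Language α) : Prop :=
  ∀ x ∈ L, ∀ y ∈ L, x <:+: y → x = y

/-- Let `L` be the language of a minimal DFA with state set `Q = {1,…,n}` (encoded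
as `Fin n`, state `i` ↦ index `i-1`), unique accepting state `n-1` whose quotient
is `{ε}`, and empty state `n`. If every transformation `t` of `Q` induced by a
nonempty word satisfies `1 ∉ rng t`, `(n-1) t = n t = n`, and for all `j ≥ 1`,
`1 t^j = n-1` implies `i t^j = n` for all `1 < i < n-1`, then `L` is factor-free. -/
theorem statement15 {α : Type} (n : ℕ) (hn : 3 ≤ n) (M : DFA α (Fin n))
    (hstart : M.start.val = 0)
    (haccept : ∀ q : Fin n, q ∈ M.accept ↔ q.val = n - 2)
    (hacceptQuot : ∀ q : Fin n, q.val = n - 2 →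
      ∀ w : List α, M.evalFrom q w ∈ M.accept ↔ w = [])
    (hempty : ∀ q : Fin n, q.val = n - 1 → ∀ w : List α, M.evalFrom q w ∉ M.accept)
    (hreach : ∀ q : Fin n, ∃ w : List α, M.eval w = q)
    (hdistinct : ∀ p q : Fin n,
      (∀ w : List α, M.evalFrom p w ∈ M.accept ↔ M.evalFrom q w ∈ M.accept) → p = q)
    (hts : ∀ w : List α, w ≠ [] →
      (∀ q : Fin n, (M.evalFrom q w).val ≠ 0) ∧
      (∀ q : Fin n, q.val = n - 2 ∨ q.val = n - 1 → (M.evalFrom q w).val = n - 1) ∧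
      (∀ j : ℕ, 1 ≤ j → ∀ q : Fin n, q.val = 0 →
        ((fun p => M.evalFrom p w)^[j] q).val = n - 2 →
        ∀ i : Fin n, i.val ≠ 0 → i.val ≠ n - 2 → i.val ≠ n - 1 →
          ((fun p => M.evalFrom p w)^[j] i).val = n - 1)) :
    FactorFree M.accepts := by
  intro x hx y hy hxy
  obtain ⟨u, v, rfl⟩ := hxy
  rw [DFA.mem_accepts] at hx hy
  have hxne : x ≠ [] := by
    intro h
    subst h
    have := (haccept _).mp hx
    simp [DFA.eval, DFA.evalFrom, hstart] at this
    omega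
  rcases eq_or_ne u [] with rfl | hu
  · have hv : v = [] := by
      have h := (hacceptQuot (M.eval x) ((haccept _).mp hx) v).mp ?_
      · exact h
      · have : M.eval ([] ++ x ++ v) = M.evalFrom (M.eval x) v := by
          simp [DFA.eval, DFA.evalFrom_of_append]
        rwa [this] at hy
    simp [hv]
  · exfalso
    set q := M.eval u with hqdef
    have hq0 : q.val ≠ 0 := (hts u hu).1 M.start
    set p := M.evalFrom q x with hpdef
    have hp : p.val = n - 1 := by
      by_cases hcase : q.val = n - 2 ∨ q.val = n - 1
      · exact (hts x hxne).2.1 q hcase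
      · push_neg at hcase
        have h1 : ((fun p => M.evalFrom p x)^[1] M.start).val = n - 2 := by
          simpa [Function.iterate_one, DFA.eval] using (haccept _).mp hx
        have := (hts x hxne).2.2 1 le_rfl M.start hstart h1 q hq0 hcase.1 hcase.2
        simpa [Function.iterate_one] using this
    have heval : M.eval (u ++ x ++ v) = M.evalFrom p v := by
      simp [DFA.eval, DFA.evalFrom_of_append, hpdef, hqdef]
    rw [heval] at hy
    exact hempty p hp v hy
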